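/- Let (Ω, μ) be a measure space and p : Ω → ℝ measurable with 1 < p⁻ ≤ p⁺ < ∞, and let p'(x) be defined by 1/p(x) + 1/p'(x) = 1. For u ∈ L^{p(·)}(Ω) and v ∈ L^{p'(·)}(Ω), |∫_Ω u v dμ| ≤ (1/p⁻ + 1/(p')⁻)·|u|_{p(·)}·|v|_{p'(·)}. -/

import Mathlib

open MeasureTheory

noncomputable def luxemburgNorm {Ω : Type*} [MeasurableSpace Ω] (μ : Measure Ω)
    (r : Ω → ℝ) (u : Ω → ℝ) : ℝ :=
  sInf {c : ℝ | 0 < c ∧ ∫ x, |u x / c| ^ r x ∂μ ≤ 1}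

section LuxAux

open Filter Real
open scoped ENNReal

variable {Ω : Type*} [MeasurableSpace Ω] {μ : Measure Ω} {r u : Ω → ℝ} {a b : ℝ}

private lemma lux_int (hr : Measurable r) (hu : Measurable u) (ha : 0 < a)
    (hrl : ∀ᵐ x ∂μ, a ≤ r x) (hru : ∀ᵐ x ∂μ, r x ≤ b)
    (hum : (∫⁻ x, ENNReal.ofReal (|u x| ^ r x) ∂μ) < ⊤)
    {c : ℝ} (hc : 0 < c) :
    Integrable (fun x ↦ |u x / c| ^ r x) μ := by
  have hm : Measurable fun x ↦ |u x / c| ^ r x := ((hu.div_const c).abs).pow hr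
  set K := max ((c⁻¹) ^ a) ((c⁻¹) ^ b) with hK
  have hK0 : 0 ≤ K := le_max_of_le_left (rpow_nonneg (inv_nonneg.2 hc.le) _)
  have hb : ∀ᵐ x ∂μ, |u x / c| ^ r x ≤ K * |u x| ^ r x := by
    filter_upwards [hrl, hru] with x h1 h2
    have e1 : |u x / c| = |u x| * c⁻¹ := by
      rw [abs_div, abs_of_pos hc, div_eq_mul_inv]
    rw [e1, Real.mul_rpow (abs_nonneg _) (inv_nonneg.2 hc.le), mul_comm]
    refine mul_le_mul_of_nonneg_right ?_ (rpow_nonneg (abs_nonneg _) _)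
    rcases le_total (c⁻¹) 1 with h | h
    · exact le_max_of_le_left (rpow_le_rpow_of_exponent_ge (inv_pos.2 hc) h h1)
    · exact le_max_of_le_right (rpow_le_rpow_of_exponent_le h h2)
  refine ⟨hm.aestronglyMeasurable, ?_⟩
  rw [hasFiniteIntegral_iff_ofReal (Eventually.of_forall fun x => rpow_nonneg (abs_nonneg _) _)]
  calc ∫⁻ x, ENNReal.ofReal (|u x / c| ^ r x) ∂μ
      ≤ ∫⁻ x, ENNReal.ofReal (K * |u x| ^ r x) ∂μ := by
        exact lintegral_mono_ae (hb.mono fun x hx => ENNReal.ofReal_le_ofReal hx)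
    _ = ENNReal.ofReal K * ∫⁻ x, ENNReal.ofReal (|u x| ^ r x) ∂μ := by
        simp_rw [ENNReal.ofReal_mul hK0]
        exact lintegral_const_mul' _ _ ENNReal.ofReal_ne_top
    _ < ⊤ := ENNReal.mul_lt_top ENNReal.ofReal_lt_top hum

private lemma lux_anti (ha : 0 < a) (hrl : ∀ᵐ x ∂μ, a ≤ r x)
    {c d : ℝ} (hc : 0 < c) (hcd : c ≤ d) :
    ∀ᵐ x ∂μ, |u x / d| ^ r x ≤ |u x / c| ^ r x := by
  filter_upwards [hrl] with x h1
  refine Real.rpow_le_rpow (abs_nonneg _) ?_ (le_trans ha.le h1)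
  rw [abs_div, abs_div, abs_of_pos hc, abs_of_pos (lt_of_lt_of_le hc hcd)]
  exact div_le_div_of_nonneg_left (abs_nonneg _) hc hcd

private lemma lux_nonempty (hr : Measurable r) (hu : Measurable u) (ha : 0 < a)
    (hrl : ∀ᵐ x ∂μ, a ≤ r x) (hru : ∀ᵐ x ∂μ, r x ≤ b)
    (hum : (∫⁻ x, ENNReal.ofReal (|u x| ^ r x) ∂μ) < ⊤) :
    {c : ℝ | 0 < c ∧ ∫ x, |u x / c| ^ r x ∂μ ≤ 1}.Nonempty := by
  set T : ℝ := ∫ x, |u x| ^ r x ∂μ with hT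
  have hT0 : 0 ≤ T := integral_nonneg fun x => rpow_nonneg (abs_nonneg _) _
  set c : ℝ := (max 1 T) ^ (1/a) with hc
  have hc1 : (1:ℝ) ≤ c := Real.one_le_rpow (le_max_left _ _) (by positivity)
  have hc0 : 0 < c := lt_of_lt_of_le one_pos hc1
  have hca : c ^ a = max 1 T := by
    rw [hc, ← Real.rpow_mul (le_trans zero_le_one (le_max_left 1 T)),
      one_div, inv_mul_cancel₀ ha.ne', Real.rpow_one]
  refine ⟨c, hc0, ?_⟩
  have hint1 : Integrable (fun x ↦ |u x| ^ r x) μ := by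
    have := lux_int (μ := μ) hr hu ha hrl hru hum one_pos
    simpa using this
  have hintc : Integrable (fun x ↦ |u x / c| ^ r x) μ := lux_int hr hu ha hrl hru hum hc0
  have hbd : ∀ᵐ x ∂μ, |u x / c| ^ r x ≤ c⁻¹ ^ a * |u x| ^ r x := by
    filter_upwards [hrl] with x h1
    have e1 : |u x / c| = |u x| * c⁻¹ := by rw [abs_div, abs_of_pos hc0, div_eq_mul_inv]
    rw [e1, Real.mul_rpow (abs_nonneg _) (inv_nonneg.2 hc0.le), mul_comm]
    refine mul_le_mul_of_nonneg_right ?_ (rpow_nonneg (abs_nonneg _) _)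
    exact rpow_le_rpow_of_exponent_ge (inv_pos.2 hc0) (inv_le_one_of_one_le₀ hc1) h1
  calc ∫ x, |u x / c| ^ r x ∂μ ≤ ∫ x, c⁻¹ ^ a * |u x| ^ r x ∂μ :=
        integral_mono_ae hintc (hint1.const_mul _) hbd
    _ = c⁻¹ ^ a * T := by rw [integral_const_mul]
    _ ≤ 1 := by
        rw [Real.inv_rpow hc0.le, hca]
        rw [inv_mul_le_iff₀ (by positivity), mul_one]
        exact le_max_right _ _

private lemma lux_nonneg (hr : Measurable r) (hu : Measurable u) (ha : 0 < a)
    (hrl : ∀ᵐ x ∂μ, a ≤ r x) (hru : ∀ᵐ x ∂μ, r x ≤ b)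
    (hum : (∫⁻ x, ENNReal.ofReal (|u x| ^ r x) ∂μ) < ⊤) :
    0 ≤ luxemburgNorm μ r u :=
  le_csInf (lux_nonempty hr hu ha hrl hru hum) fun c hc => hc.1.le

private lemma lux_lt (hr : Measurable r) (hu : Measurable u) (ha : 0 < a)
    (hrl : ∀ᵐ x ∂μ, a ≤ r x) (hru : ∀ᵐ x ∂μ, r x ≤ b)
    (hum : (∫⁻ x, ENNReal.ofReal (|u x| ^ r x) ∂μ) < ⊤)
    {c : ℝ} (hc : luxemburgNorm μ r u < c) :
    0 < c ∧ ∫ x, |u x / c| ^ r x ∂μ ≤ 1 := by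
  obtain ⟨c', hc'S, hlt⟩ := exists_lt_of_csInf_lt (lux_nonempty hr hu ha hrl hru hum) hc
  have hc0 : 0 < c := lt_trans hc'S.1 hlt
  refine ⟨hc0, le_trans ?_ hc'S.2⟩
  exact integral_mono_ae (lux_int hr hu ha hrl hru hum hc0)
    (lux_int hr hu ha hrl hru hum hc'S.1) (lux_anti ha hrl hc'S.1 hlt.le)

private lemma lux_modular (hr : Measurable r) (hu : Measurable u) (ha : 0 < a)
    (hrl : ∀ᵐ x ∂μ, a ≤ r x) (hru : ∀ᵐ x ∂μ, r x ≤ b)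
    (hum : (∫⁻ x, ENNReal.ofReal (|u x| ^ r x) ∂μ) < ⊤)
    (hN : 0 < luxemburgNorm μ r u) :
    ∫ x, |u x / luxemburgNorm μ r u| ^ r x ∂μ ≤ 1 := by
  set N := luxemburgNorm μ r u with hNdef
  set Φ : ℝ → ℝ≥0∞ := fun c => ∫⁻ x, ENNReal.ofReal (|u x / c| ^ r x) ∂μ with hΦ
  have hΦeq : ∀ {c : ℝ}, 0 < c →
      ENNReal.ofReal (∫ x, |u x / c| ^ r x ∂μ) = Φ c := fun hc =>
    ofReal_integral_eq_lintegral_ofReal (lux_int hr hu ha hrl hru hum hc)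
      (Eventually.of_forall fun x => rpow_nonneg (abs_nonneg _) _)
  have hseq : ∀ n : ℕ, Φ (N + 1/(n+1)) ≤ 1 := by
    intro n
    have hlt : N < N + 1/(n+1) := lt_add_of_pos_right _ (by positivity)
    obtain ⟨h0, h1⟩ := lux_lt hr hu ha hrl hru hum hlt
    rw [← hΦeq h0]
    calc ENNReal.ofReal (∫ x, |u x / (N + 1/(n+1))| ^ r x ∂μ)
        ≤ ENNReal.ofReal 1 := ENNReal.ofReal_le_ofReal h1
      _ = 1 := ENNReal.ofReal_one
  have hconv : ∀ᵐ x ∂μ, Tendsto (fun n : ℕ => ENNReal.ofReal (|u x / (N + 1/(n+1))| ^ r x))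
      atTop (nhds (ENNReal.ofReal (|u x / N| ^ r x))) := by
    filter_upwards [hrl] with x hx
    refine ENNReal.tendsto_ofReal ?_
    have hc : Tendsto (fun n : ℕ => N + 1/((n:ℝ)+1)) atTop (nhds N) := by
      have := tendsto_one_div_add_atTop_nhds_zero_nat (𝕜 := ℝ)
      have h2 := this.const_add N
      simpa using h2
    have hbase : Tendsto (fun n : ℕ => |u x / (N + 1/((n:ℝ)+1))|) atTop (nhds (|u x / N|)) := by
      exact ((tendsto_const_nhds.div hc hN.ne').abs)
    have hcont : ContinuousAt (fun t : ℝ => t ^ r x) (|u x / N|) :=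
      Real.continuousAt_rpow_const _ _ (Or.inr (le_trans ha.le hx))
    exact hcont.tendsto.comp hbase
  have key : Φ N ≤ 1 := by
    have hΦN : Φ N = ∫⁻ x, liminf (fun n : ℕ => ENNReal.ofReal (|u x / (N + 1/(n+1))| ^ r x)) atTop ∂μ := by
      refine lintegral_congr_ae ?_
      filter_upwards [hconv] with x hx
      exact (hx.liminf_eq).symm
    rw [hΦN]
    calc ∫⁻ x, liminf (fun n : ℕ => ENNReal.ofReal (|u x / (N + 1/(n+1))| ^ r x)) atTop ∂μ
        ≤ liminf (fun n : ℕ => Φ (N + 1/(n+1))) atTop := by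
          refine lintegral_liminf_le fun n => ?_
          exact ((hu.div_const _).abs.pow hr).ennreal_ofReal
      _ ≤ liminf (fun _ : ℕ => (1:ℝ≥0∞)) atTop := liminf_le_liminf (Eventually.of_forall hseq)
      _ = 1 := liminf_const 1
  have h2 : ENNReal.ofReal (∫ x, |u x / N| ^ r x ∂μ) ≤ ENNReal.ofReal 1 := by
    rw [hΦeq hN, ENNReal.ofReal_one]; exact key
  exact (ENNReal.ofReal_le_ofReal_iff zero_le_one).1 h2

private lemma lux_zero (hr : Measurable r) (hu : Measurable u) (ha : 0 < a)
    (hrl : ∀ᵐ x ∂μ, a ≤ r x) (hru : ∀ᵐ x ∂μ, r x ≤ b)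
    (hum : (∫⁻ x, ENNReal.ofReal (|u x| ^ r x) ∂μ) < ⊤)
    (hN : luxemburgNorm μ r u = 0) : u =ᵐ[μ] 0 := by
  have hA : ∀ δ : ℝ, 0 < δ → μ {x | δ ≤ |u x|} = 0 := by
    intro δ hδ
    set A := {x | δ ≤ |u x|} with hAdef
    have hAm : MeasurableSet A := measurableSet_le measurable_const hu.abs
    have hkey : ∀ c : ℝ, (0 < c ∧ ∫ x, |u x / c| ^ r x ∂μ ≤ 1) → c ≤ δ →
        μ A ≤ ENNReal.ofReal ((c/δ) ^ a) := by
      intro c hcS hcδ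
      have hc0 := hcS.1
      have hΦ : (∫⁻ x, ENNReal.ofReal (|u x / c| ^ r x) ∂μ) ≤ 1 := by
        rw [← ofReal_integral_eq_lintegral_ofReal (lux_int hr hu ha hrl hru hum hc0)
          (Eventually.of_forall fun x => rpow_nonneg (abs_nonneg _) _)]
        calc ENNReal.ofReal (∫ x, |u x / c| ^ r x ∂μ) ≤ ENNReal.ofReal 1 :=
              ENNReal.ofReal_le_ofReal hcS.2
          _ = 1 := ENNReal.ofReal_one
      have hind : ∀ᵐ x ∂μ, A.indicator (fun _ => ENNReal.ofReal ((δ/c) ^ a)) x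
          ≤ ENNReal.ofReal (|u x / c| ^ r x) := by
        filter_upwards [hrl] with x hx
        by_cases hxA : x ∈ A
        · rw [Set.indicator_of_mem hxA]
          refine ENNReal.ofReal_le_ofReal ?_
          have h1 : (1:ℝ) ≤ δ / c := (one_le_div hc0).2 hcδ
          have huxc : δ / c ≤ |u x / c| := by
            rw [abs_div, abs_of_pos hc0]
            gcongr
            exact hxA
          calc (δ/c) ^ a ≤ (δ/c) ^ r x := rpow_le_rpow_of_exponent_le h1 hx
            _ ≤ |u x / c| ^ r x := rpow_le_rpow (by positivity) huxc (le_trans ha.le hx)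
        · rw [Set.indicator_of_notMem hxA]; exact zero_le
      have hlow : ENNReal.ofReal ((δ/c) ^ a) * μ A ≤ 1 := by
        have h3 := lintegral_mono_ae hind
        rw [lintegral_indicator_const hAm] at h3
        exact le_trans h3 hΦ
      have hpos : 0 < (δ/c) ^ a := rpow_pos_of_pos (by positivity) _
      have hinv : ENNReal.ofReal ((c/δ) ^ a) = (ENNReal.ofReal ((δ/c) ^ a))⁻¹ := by
        rw [← ENNReal.ofReal_inv_of_pos hpos, ← Real.inv_rpow (by positivity : (0:ℝ) ≤ δ/c),
          inv_div]
      rw [hinv, ENNReal.le_inv_iff_mul_le, mul_comm]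
      exact hlow
    have hsmall : ∀ η : ℝ, 0 < η → μ A ≤ ENNReal.ofReal η := by
      intro η hη
      set ε := min δ (δ * η ^ (1/a)) with hε
      have hε0 : 0 < ε := lt_min hδ (by positivity)
      obtain ⟨c, hcS, hclt⟩ := exists_lt_of_csInf_lt (lux_nonempty hr hu ha hrl hru hum)
        (by rw [show sInf {c : ℝ | 0 < c ∧ ∫ x, |u x / c| ^ r x ∂μ ≤ 1}
              = luxemburgNorm μ r u from rfl, hN]; exact hε0)
      have hcδ : c ≤ δ := le_trans hclt.le (min_le_left _ _)
      refine le_trans (hkey c hcS hcδ) (ENNReal.ofReal_le_ofReal ?_)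
      have h2 : c / δ < η ^ (1/a) := by
        rw [div_lt_iff₀ hδ]
        calc c < ε := hclt
          _ ≤ δ * η ^ (1/a) := min_le_right _ _
          _ = η ^ (1/a) * δ := mul_comm _ _
      calc (c/δ) ^ a ≤ (η ^ (1/a)) ^ a :=
            rpow_le_rpow (div_nonneg hcS.1.le hδ.le) h2.le ha.le
        _ = η := by rw [← Real.rpow_mul hη.le, one_div, inv_mul_cancel₀ ha.ne', Real.rpow_one]
    by_contra h0
    have hm : 0 < min (μ A) 1 := lt_min (pos_iff_ne_zero.2 h0) one_pos
    have hmt : (0:ℝ) < (min (μ A) 1).toReal := ENNReal.toReal_pos hm.ne' (by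
      exact ne_top_of_le_ne_top ENNReal.one_ne_top (min_le_right _ _))
    have := hsmall ((min (μ A) 1).toReal / 2) (by positivity)
    have hlt : ENNReal.ofReal ((min (μ A) 1).toReal / 2) < min (μ A) 1 := by
      rw [ENNReal.ofReal_lt_iff_lt_toReal (by positivity)
        (ne_top_of_le_ne_top ENNReal.one_ne_top (min_le_right _ _))]
      linarith
    exact absurd this (not_le.2 (lt_of_lt_of_le hlt (min_le_left _ _)))
  have hnull : μ {x | u x ≠ 0} = 0 := by
    have hsub : {x | u x ≠ 0} ⊆ ⋃ n : ℕ, {x | 1/((n:ℝ)+1) ≤ |u x|} := by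
      intro x hx
      have hux : 0 < |u x| := abs_pos.2 hx
      obtain ⟨n, hn⟩ := exists_nat_one_div_lt hux
      exact Set.mem_iUnion.2 ⟨n, hn.le⟩
    exact measure_mono_null hsub (measure_iUnion_null fun n => hA _ (by positivity))
  rw [Filter.EventuallyEq, ae_iff]
  simpa using hnull

end LuxAux

open Filter Real
open scoped ENNReal

theorem stmt_14 {Ω : Type*} [MeasurableSpace Ω] (μ : Measure Ω)
    (p p' u v : Ω → ℝ) (hp : Measurable p) (hp' : Measurable p')
    (hu : Measurable u) (hv : Measurable v)
    (pm pp p'm : ℝ) (hpm : pm = essInf p μ) (hpp : pp = essSup p μ)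
    (hp'm : p'm = essInf p' μ) (h1 : 1 < pm) (h2 : pm ≤ pp)
    (hconj : ∀ x, 1 / p x + 1 / p' x = 1)
    (humem : (∫⁻ x, ENNReal.ofReal (|u x| ^ p x) ∂μ) < ⊤)
    (hvmem : (∫⁻ x, ENNReal.ofReal (|v x| ^ p' x) ∂μ) < ⊤) :
    |∫ x, u x * v x ∂μ| ≤ (1 / pm + 1 / p'm) * luxemburgNorm μ p u * luxemburgNorm μ p' v := by
  -- the measure is nonzero
  by_cases hμ0 : μ = 0
  · exfalso
    have hz : essSup p μ = 0 := by
      subst hμ0; rw [essSup, ae_eq_bot.2 rfl]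
      simp only [Filter.limsup, Filter.limsSup, eventually_bot, Set.setOf_true]
      exact Real.sInf_of_not_bddBelow not_bddBelow_univ
    rw [← hpp] at hz; linarith
  haveI : (ae μ).NeBot := ae_neBot.2 hμ0
  -- essential bounds for p
  have hbdd_above : IsBoundedUnder (· ≤ ·) (ae μ) p := by
    by_contra h
    have hz : essSup p μ = 0 := by
      rw [essSup, Filter.limsup, Filter.limsSup]
      convert Real.sInf_empty
      · rfl
      rw [Set.eq_empty_iff_forall_notMem]; intro x hx; exact h ⟨x, hx⟩
    rw [← hpp] at hz; linarith
  have hbdd_below : IsBoundedUnder (· ≥ ·) (ae μ) p := by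
    by_contra h
    have hz : essInf p μ = 0 := by
      rw [essInf, Filter.liminf, Filter.limsInf]
      convert Real.sSup_empty
      · rfl
      rw [Set.eq_empty_iff_forall_notMem]; intro x hx; exact h ⟨x, hx⟩
    rw [← hpm] at hz; linarith
  have hp_ub : ∀ᵐ x ∂μ, p x ≤ pp := by rw [hpp]; exact ae_le_essSup hbdd_above
  have hp_lb : ∀ᵐ x ∂μ, pm ≤ p x := by rw [hpm]; exact ae_essInf_le hbdd_below
  have hpm_pos : 0 < pm := lt_trans one_pos h1
  have hpm1 : 0 < pm - 1 := by linarith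
  -- pointwise facts about p'
  have hp'_facts : ∀ᵐ x ∂μ, 1 < p' x ∧ p' x ≤ pm/(pm-1) ∧ (p x).HolderConjugate (p' x) := by
    filter_upwards [hp_lb] with x hx
    have hpx1 : 1 < p x := lt_of_lt_of_le h1 hx
    have hpx0 : 0 < p x := lt_trans one_pos hpx1
    have hc := hconj x
    have hp'ne : p' x ≠ 0 := by
      intro h
      rw [h, div_zero, add_zero, div_eq_one_iff_eq hpx0.ne'] at hc
      exact hpx1.ne' hc.symm
    have hval : p' x = p x / (p x - 1) := by
      rw [eq_div_iff (by linarith : p x - 1 ≠ 0)]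
      field_simp at hc
      linarith
    have h1p' : 1 < p' x := by
      rw [hval, lt_div_iff₀ (by linarith)]
      linarith
    refine ⟨h1p', ?_, Real.holderConjugate_iff.mpr ⟨hpx1, by simpa [one_div] using hc⟩⟩
    rw [hval, div_le_div_iff₀ (by linarith) hpm1]
    nlinarith
  have hp'_lb1 : ∀ᵐ x ∂μ, (1:ℝ) ≤ p' x := hp'_facts.mono fun x hx => hx.1.le
  have hp'_ub : ∀ᵐ x ∂μ, p' x ≤ pm/(pm-1) := hp'_facts.mono fun x hx => hx.2.1
  have hp'bdd_below : IsBoundedUnder (· ≥ ·) (ae μ) p' :=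
    ⟨1, Filter.eventually_map.2 (hp'_lb1.mono fun x hx => hx)⟩
  have hp'm_le : ∀ᵐ x ∂μ, p'm ≤ p' x := by rw [hp'm]; exact ae_essInf_le hp'bdd_below
  have h1p'm : (1:ℝ) ≤ p'm := by
    rw [hp'm]
    exact le_liminf_of_le (isCoboundedUnder_ge_of_eventually_le _ hp'_ub) hp'_lb1
  have hp'm_pos : 0 < p'm := lt_of_lt_of_le one_pos h1p'm
  -- the Luxemburg norms
  set Nu := luxemburgNorm μ p u with hNu
  set Nv := luxemburgNorm μ p' v with hNv
  have hNu0 : 0 ≤ Nu := lux_nonneg hp hu hpm_pos hp_lb hp_ub humem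
  have hNv0 : 0 ≤ Nv := lux_nonneg hp' hv one_pos hp'_lb1 hp'_ub hvmem
  have hcoef : 0 ≤ 1/pm + 1/p'm := by positivity
  rcases eq_or_lt_of_le hNu0 with hNuz | hNuP
  · have huz : u =ᵐ[μ] 0 := lux_zero hp hu hpm_pos hp_lb hp_ub humem hNuz.symm
    have hz : ∫ x, u x * v x ∂μ = 0 := by
      rw [integral_congr_ae (μ := μ) (g := fun _ => (0:ℝ))
        (huz.mono fun x hx => by rw [hx]; simp)]
      simp
    rw [hz, abs_zero, ← hNuz, mul_zero, zero_mul]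
  rcases eq_or_lt_of_le hNv0 with hNvz | hNvP
  · have hvz : v =ᵐ[μ] 0 := lux_zero hp' hv one_pos hp'_lb1 hp'_ub hvmem hNvz.symm
    have hz : ∫ x, u x * v x ∂μ = 0 := by
      rw [integral_congr_ae (μ := μ) (g := fun _ => (0:ℝ))
        (hvz.mono fun x hx => by rw [hx]; simp)]
      simp
    rw [hz, abs_zero, ← hNvz, mul_zero]
  -- main case
  have hmodu : ∫ x, |u x / Nu| ^ p x ∂μ ≤ 1 :=
    lux_modular hp hu hpm_pos hp_lb hp_ub humem hNuP
  have hmodv : ∫ x, |v x / Nv| ^ p' x ∂μ ≤ 1 :=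
    lux_modular hp' hv one_pos hp'_lb1 hp'_ub hvmem hNvP
  have hintu : Integrable (fun x => |u x / Nu| ^ p x) μ :=
    lux_int hp hu hpm_pos hp_lb hp_ub humem hNuP
  have hintv : Integrable (fun x => |v x / Nv| ^ p' x) μ :=
    lux_int hp' hv one_pos hp'_lb1 hp'_ub hvmem hNvP
  set G : Ω → ℝ :=
    fun x => Nu * Nv * ((1/pm) * |u x / Nu| ^ p x + (1/p'm) * |v x / Nv| ^ p' x) with hG
  have hGint : Integrable G μ := ((hintu.const_mul _).add (hintv.const_mul _)).const_mul _
  have hbound : ∀ᵐ x ∂μ, |u x * v x| ≤ G x := by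
    filter_upwards [hp_lb, hp'_facts, hp'm_le] with x hx hx' hx''
    have hconjx := hx'.2.2
    have young := Real.young_inequality_of_nonneg (abs_nonneg (u x / Nu))
      (abs_nonneg (v x / Nv)) hconjx
    have e : |u x * v x| = Nu * Nv * (|u x / Nu| * |v x / Nv|) := by
      rw [abs_div, abs_div, abs_of_pos hNuP, abs_of_pos hNvP, abs_mul]
      field_simp
    rw [e, hG]
    refine mul_le_mul_of_nonneg_left ?_ (by positivity)
    refine le_trans young (add_le_add ?_ ?_)
    · rw [div_eq_mul_inv, mul_comm, one_div]
      refine mul_le_mul_of_nonneg_right ?_ (rpow_nonneg (abs_nonneg _) _)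
      exact inv_anti₀ hpm_pos hx
    · rw [div_eq_mul_inv, mul_comm, one_div]
      refine mul_le_mul_of_nonneg_right ?_ (rpow_nonneg (abs_nonneg _) _)
      exact inv_anti₀ hp'm_pos hx''
  have hintuv : Integrable (fun x => u x * v x) μ :=
    Integrable.mono' hGint (hu.mul hv).aestronglyMeasurable
      (by filter_upwards [hbound] with x hx; rwa [Real.norm_eq_abs])
  calc |∫ x, u x * v x ∂μ| ≤ ∫ x, |u x * v x| ∂μ := by
        simpa only [Real.norm_eq_abs] using norm_integral_le_integral_norm (fun x => u x * v x) (μ := μ)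
    _ ≤ ∫ x, G x ∂μ := integral_mono_ae hintuv.abs hGint hbound
    _ = Nu * Nv * ((1/pm) * ∫ x, |u x / Nu| ^ p x ∂μ + (1/p'm) * ∫ x, |v x / Nv| ^ p' x ∂μ) := by
        rw [hG]
        rw [integral_const_mul, integral_add (hintu.const_mul _) (hintv.const_mul _),
          integral_const_mul, integral_const_mul]
    _ ≤ Nu * Nv * ((1/pm) * 1 + (1/p'm) * 1) := by
        refine mul_le_mul_of_nonneg_left (add_le_add ?_ ?_) (by positivity)
        · exact mul_le_mul_of_nonneg_left hmodu (by positivity)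
        · exact mul_le_mul_of_nonneg_left hmodv (by positivity)
    _ = (1 / pm + 1 / p'm) * Nu * Nv := by ring
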